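/- Let A_1, …, A_N be real n×n matrices, τ ≥ 0, and m a positive integer. Suppose there exist symmetric positive definite matrices P_{i,r}, scalars α_{irs} > 0, and scalars γ_{jqirs} ≥ 0 with Σ_{s=1}^m γ_{jqirs} < 1 satisfying: (i) A_i^T P_{i,r} + P_{i,r} A_i ≺ Σ_{s≠r} α_{irs} (P_{i,s} − P_{i,r}) for all i and r, and (ii) exp(A_i^T τ) P_{j,q} exp(A_i τ) ≺ P_{i,r} + Σ_{s≠r} γ_{jqirs} (P_{i,s} − P_{i,r}) for all i ≠ j and all q, r. Define V_i(x) = max_{1≤r≤m} x^T P_{i,r} x. Then for every δ ≥ 0, every pair i ≠ j, and every x ≠ 0: V_j(exp((τ + δ) A_i) x) < V_i(x). -/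

import Mathlib

open Matrix NormedSpace Set Filter Topology

/-- The piece-wise quadratic function `V(x) = max_{1 ≤ r ≤ m} xᵀ P_r x`. -/
noncomputable def pwMax {n m : ℕ} (hm : 0 < m)
    (P : Fin m → Matrix (Fin n) (Fin n) ℝ) (x : Fin n → ℝ) : ℝ :=
  Finset.univ.sup' (Finset.univ_nonempty_iff.mpr ⟨⟨0, hm⟩⟩)
    (fun r : Fin m => x ⬝ᵥ P r *ᵥ x)


section Helpers

variable {n : ℕ}

lemma quad_add (y : Fin n → ℝ) (M1 M2 : Matrix (Fin n) (Fin n) ℝ) :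
    y ⬝ᵥ ((M1 + M2) *ᵥ y) = y ⬝ᵥ (M1 *ᵥ y) + y ⬝ᵥ (M2 *ᵥ y) := by
  simp [Matrix.add_mulVec, dotProduct_add]

lemma quad_sub (y : Fin n → ℝ) (M1 M2 : Matrix (Fin n) (Fin n) ℝ) :
    y ⬝ᵥ ((M1 - M2) *ᵥ y) = y ⬝ᵥ (M1 *ᵥ y) - y ⬝ᵥ (M2 *ᵥ y) := by
  simp [Matrix.sub_mulVec, dotProduct_sub]

lemma quad_sum {m : ℕ} (y : Fin n → ℝ) (S : Finset (Fin m))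
    (M : Fin m → Matrix (Fin n) (Fin n) ℝ) :
    y ⬝ᵥ ((∑ s ∈ S, M s) *ᵥ y) = ∑ s ∈ S, y ⬝ᵥ (M s *ᵥ y) := by
  classical
  induction S using Finset.induction with
  | empty => simp [Matrix.zero_mulVec]
  | insert a s h ih =>
      rw [Finset.sum_insert h, quad_add, ih, Finset.sum_insert h]

lemma quad_smul (y : Fin n → ℝ) (c : ℝ) (M : Matrix (Fin n) (Fin n) ℝ) :
    y ⬝ᵥ ((c • M) *ᵥ y) = c * (y ⬝ᵥ (M *ᵥ y)) := by
  simp [Matrix.smul_mulVec, dotProduct_smul]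

lemma quad_conj (E P : Matrix (Fin n) (Fin n) ℝ) (y : Fin n → ℝ) :
    (E *ᵥ y) ⬝ᵥ (P *ᵥ (E *ᵥ y)) = y ⬝ᵥ ((Eᵀ * P * E) *ᵥ y) := by
  have h1 : (Eᵀ * P * E) *ᵥ y = Eᵀ *ᵥ (P *ᵥ (E *ᵥ y)) := by
    rw [← Matrix.mulVec_mulVec, ← Matrix.mulVec_mulVec]
  rw [h1, Matrix.dotProduct_mulVec y Eᵀ, Matrix.vecMul_transpose]

lemma posdef_quad {M : Matrix (Fin n) (Fin n) ℝ} (hM : M.PosDef) {y : Fin n → ℝ} (hy : y ≠ 0) :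
    0 < y ⬝ᵥ (M *ᵥ y) := by
  have := hM.dotProduct_mulVec_pos hy
  simpa using this

lemma possemidef_quad {M : Matrix (Fin n) (Fin n) ℝ} (hM : M.PosSemidef) (y : Fin n → ℝ) :
    0 ≤ y ⬝ᵥ (M *ᵥ y) := by
  have := hM.dotProduct_mulVec_nonneg y
  simpa using this

lemma hasDerivAt_expFlow (A : Matrix (Fin n) (Fin n) ℝ) (x : Fin n → ℝ) (t : ℝ) :
    HasDerivAt (fun t : ℝ => exp (t • A) *ᵥ x) (A *ᵥ (exp (t • A) *ᵥ x)) t := by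
  letI : SeminormedRing (Matrix (Fin n) (Fin n) ℝ) := Matrix.linftyOpSemiNormedRing
  letI : NormedRing (Matrix (Fin n) (Fin n) ℝ) := Matrix.linftyOpNormedRing
  letI : NormedAlgebra ℝ (Matrix (Fin n) (Fin n) ℝ) := Matrix.linftyOpNormedAlgebra
  have hexp : HasDerivAt (fun u : ℝ => exp (u • A)) (A * exp (t • A)) t :=
    hasDerivAt_exp_smul_const' A t
  let L : Matrix (Fin n) (Fin n) ℝ →ₗ[ℝ] (Fin n → ℝ) :=
    { toFun := fun M => M *ᵥ x
      map_add' := fun a b => Matrix.add_mulVec a b x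
      map_smul' := fun c a => Matrix.smul_mulVec c a x }
  have hL : Continuous L := LinearMap.continuous_of_finiteDimensional L
  let Lc : Matrix (Fin n) (Fin n) ℝ →L[ℝ] (Fin n → ℝ) := ⟨L, hL⟩
  have hcomp := (Lc.hasFDerivAt (x := exp (t • A))).comp_hasDerivAt t hexp
  rw [Matrix.mulVec_mulVec]
  exact hcomp

lemma HasDerivAt.dotProd {u w : ℝ → Fin n → ℝ} {u' w' : Fin n → ℝ} {t : ℝ}
    (hu : HasDerivAt u u' t) (hw : HasDerivAt w w' t) :
    HasDerivAt (fun t => u t ⬝ᵥ w t) (u' ⬝ᵥ w t + u t ⬝ᵥ w') t := by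
  simp only [dotProduct]
  rw [← Finset.sum_add_distrib]
  exact HasDerivAt.fun_sum fun i _ =>
    ((hasDerivAt_pi.1 hu i).mul (hasDerivAt_pi.1 hw i))

lemma hasDerivAt_quadFlow (A P : Matrix (Fin n) (Fin n) ℝ) (x : Fin n → ℝ) (t : ℝ) :
    HasDerivAt (fun t : ℝ => (exp (t • A) *ᵥ x) ⬝ᵥ (P *ᵥ (exp (t • A) *ᵥ x)))
      ((exp (t • A) *ᵥ x) ⬝ᵥ ((Aᵀ * P + P * A) *ᵥ (exp (t • A) *ᵥ x))) t := by
  have hφ := hasDerivAt_expFlow A x t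
  have hw : HasDerivAt (fun t : ℝ => P *ᵥ (exp (t • A) *ᵥ x))
      (P *ᵥ (A *ᵥ (exp (t • A) *ᵥ x))) t := by
    have hP : Continuous (P.mulVecLin) := LinearMap.continuous_of_finiteDimensional _
    let Pc : (Fin n → ℝ) →L[ℝ] (Fin n → ℝ) := ⟨P.mulVecLin, hP⟩
    have := (Pc.hasFDerivAt (x := exp (t • A) *ᵥ x)).comp_hasDerivAt t hφ
    simpa [Pc, Function.comp_def, Matrix.mulVec_mulVec, Matrix.mulVecLin] using this
  have h := hφ.dotProd hw
  set φ := exp (t • A) *ᵥ x with hφdef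
  have heq : (A *ᵥ φ) ⬝ᵥ (P *ᵥ φ) + φ ⬝ᵥ (P *ᵥ (A *ᵥ φ)) = φ ⬝ᵥ ((Aᵀ * P + P * A) *ᵥ φ) := by
    rw [quad_add]
    congr 1
    · have h1 : (Aᵀ * P) *ᵥ φ = Aᵀ *ᵥ (P *ᵥ φ) := (Matrix.mulVec_mulVec _ _ _).symm
      rw [h1, Matrix.dotProduct_mulVec φ Aᵀ, Matrix.vecMul_transpose]
    · rw [← Matrix.mulVec_mulVec]
  rw [← heq]
  exact h

lemma sup'_comp_le_of_deriv_nonpos {ι : Type*} [Fintype ι]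
    (hne : (Finset.univ : Finset ι).Nonempty)
    (v D : ι → ℝ → ℝ)
    (hv : ∀ r t, HasDerivAt (v r) (D r t) t)
    (hD : ∀ t r, (∀ s, v s t ≤ v r t) → D r t ≤ 0)
    {b : ℝ} (hb : 0 ≤ b) :
    Finset.univ.sup' hne (fun r => v r b) ≤ Finset.univ.sup' hne (fun r => v r 0) := by
  set f : ℝ → ℝ := fun t => Finset.univ.sup' hne (fun r => v r t) with hf
  have hfc : Continuous f := by
    apply Continuous.finset_sup'_apply hne
    intro i _
    exact continuous_iff_continuousAt.mpr (fun t => (hv i t).continuousAt)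
  have key : ∀ ⦃x⦄, x ∈ Icc (0:ℝ) b → f x ≤ f 0 := by
    apply image_le_of_liminf_slope_right_le_deriv_boundary (B := fun _ => f 0)
      (B' := fun _ => 0) hfc.continuousOn le_rfl continuousOn_const
      (fun x _ => hasDerivWithinAt_const x _ (f 0))
    intro t ht r hr
    obtain ⟨r0, -, hr0⟩ := Finset.exists_mem_eq_sup' hne (fun s => v s t)
    have hQ : ∀ s : ι, ∀ᶠ z in 𝓝[>] t,
        (v s t < f t → v s z < v r0 z) ∧ (v s t = f t → slope (v s) t z < r) := by
      intro s
      have h1 : ∀ᶠ z in 𝓝[>] t, v s t < f t → v s z < v r0 z := by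
        by_cases hc : v s t < f t
        · have htend : Tendsto (fun z => v r0 z - v s z) (𝓝 t) (𝓝 (v r0 t - v s t)) :=
            ((hv r0 t).continuousAt.sub (hv s t).continuousAt)
          have hpos : 0 < v r0 t - v s t := by rw [← hr0]; linarith
          have := htend.eventually (eventually_gt_nhds hpos)
          exact (this.filter_mono nhdsWithin_le_nhds).mono (fun z hz _ => by linarith)
        · exact Eventually.of_forall (fun z h => absurd h hc)
      have h2 : ∀ᶠ z in 𝓝[>] t, v s t = f t → slope (v s) t z < r := by
        by_cases hc : v s t = f t
        · have hach : ∀ s', v s' t ≤ v s t := by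
            intro s'; rw [hc]; exact Finset.le_sup' (fun u => v u t) (Finset.mem_univ s')
          have hDle : D s t ≤ 0 := hD t s hach
          have htend : Tendsto (slope (v s) t) (𝓝[≠] t) (𝓝 (D s t)) :=
            hasDerivAt_iff_tendsto_slope.mp (hv s t)
          have : ∀ᶠ z in 𝓝[≠] t, slope (v s) t z < r :=
            htend.eventually (eventually_lt_nhds (by linarith))
          have hsub : 𝓝[>] t ≤ 𝓝[≠] t :=
            nhdsWithin_mono t (fun z hz => ne_of_gt hz)
          exact (this.filter_mono hsub).mono (fun z hz _ => hz)
        · exact Eventually.of_forall (fun z h => absurd h hc)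
      exact h1.and h2
    have hQ' : ∀ᶠ z in 𝓝[>] t, ∀ s : ι,
        (v s t < f t → v s z < v r0 z) ∧ (v s t = f t → slope (v s) t z < r) :=
      eventually_all.2 hQ
    have hgt : ∀ᶠ z in 𝓝[>] t, t < z := eventually_mem_nhdsWithin
    apply ((hQ'.and hgt)).frequently.mono
    rintro z ⟨hz1, hz2⟩
    obtain ⟨s₀, -, hs₀⟩ := Finset.exists_mem_eq_sup' hne (fun s => v s z)
    have hle : v s₀ t ≤ f t := Finset.le_sup' (fun u => v u t) (Finset.mem_univ s₀)
    rcases lt_or_eq_of_le hle with hlt | heq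
    · exfalso
      have h1 := (hz1 s₀).1 hlt
      have h2 : v r0 z ≤ f z := Finset.le_sup' (fun u => v u z) (Finset.mem_univ r0)
      have hfz : f z = v s₀ z := hs₀
      rw [hfz] at h2
      linarith
    · have hfz : f z = v s₀ z := hs₀
      have : slope f t z = slope (v s₀) t z := by
        rw [slope_def_field, slope_def_field, hfz, ← heq]
      rw [this]
      exact (hz1 s₀).2 heq
  exact key (right_mem_Icc.mpr hb)

end Helpers

section Main

variable {n m : ℕ}

/-- Along the flow of mode `i`, the piecewise-quadratic function does not increase. -/
lemma pwMax_flow_le (hm : 0 < m) (A : Matrix (Fin n) (Fin n) ℝ)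
    (P : Fin m → Matrix (Fin n) (Fin n) ℝ) (α : Fin m → Fin m → ℝ)
    (hα : ∀ r s, 0 < α r s)
    (hder : ∀ r, ((∑ s ∈ Finset.univ.erase r, α r s • (P s - P r)) -
        (Aᵀ * P r + P r * A)).PosDef)
    (x : Fin n → ℝ) {δ : ℝ} (hδ : 0 ≤ δ) :
    pwMax hm P (exp (δ • A) *ᵥ x) ≤ pwMax hm P x := by
  have hne : (Finset.univ : Finset (Fin m)).Nonempty :=
    Finset.univ_nonempty_iff.mpr ⟨⟨0, hm⟩⟩
  set v : Fin m → ℝ → ℝ := fun r t => (exp (t • A) *ᵥ x) ⬝ᵥ (P r *ᵥ (exp (t • A) *ᵥ x))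
    with hv
  set D : Fin m → ℝ → ℝ := fun r t =>
    (exp (t • A) *ᵥ x) ⬝ᵥ ((Aᵀ * P r + P r * A) *ᵥ (exp (t • A) *ᵥ x)) with hD
  have hderiv : ∀ r t, HasDerivAt (v r) (D r t) t := fun r t => hasDerivAt_quadFlow A (P r) x t
  have hDnonpos : ∀ t r, (∀ s, v s t ≤ v r t) → D r t ≤ 0 := by
    intro t r hach
    set φ := exp (t • A) *ᵥ x with hφ
    have h0 : 0 ≤ φ ⬝ᵥ (((∑ s ∈ Finset.univ.erase r, α r s • (P s - P r)) -
        (Aᵀ * P r + P r * A)) *ᵥ φ) := possemidef_quad (hder r).posSemidef φ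
    rw [quad_sub, quad_sum] at h0
    have hsum : ∑ s ∈ Finset.univ.erase r, φ ⬝ᵥ ((α r s • (P s - P r)) *ᵥ φ) ≤ 0 := by
      apply Finset.sum_nonpos
      intro s _
      rw [quad_smul, quad_sub]
      have : v s t ≤ v r t := hach s
      have hvv : φ ⬝ᵥ (P s *ᵥ φ) - φ ⬝ᵥ (P r *ᵥ φ) ≤ 0 := by
        simp only [hv] at this
        linarith [this]
      exact mul_nonpos_of_nonneg_of_nonpos (hα r s).le hvv
    simp only [hD]
    linarith
  have hmain := sup'_comp_le_of_deriv_nonpos hne v D hderiv hDnonpos hδ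
  have h0 : (fun r => v r 0) = fun r : Fin m => x ⬝ᵥ P r *ᵥ x := by
    funext r
    simp [hv, exp_zero, Matrix.one_mulVec]
  rw [h0] at hmain
  exact hmain

end Main

/-- under the BMI dwell-time conditions, the piece-wise quadratic
Lyapunov function strictly decreases across any switch occurring after any elapsed
time of at least `τ`: `V_j(exp((τ+δ)A_i)x) < V_i(x)` for all `δ ≥ 0`, `i ≠ j`, `x ≠ 0`. -/
theorem pwMax_decreases_across_switches
    (n N m : ℕ) (hm : 0 < m) (A : Fin N → Matrix (Fin n) (Fin n) ℝ)
    (τ : ℝ) (hτ : 0 ≤ τ)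
    (P : Fin N → Fin m → Matrix (Fin n) (Fin n) ℝ)
    (α : Fin N → Fin m → Fin m → ℝ)
    (γ : Fin N → Fin m → Fin N → Fin m → Fin m → ℝ)
    (hPsymm : ∀ i r, (P i r).IsSymm)
    (hPpos : ∀ i r, (P i r).PosDef)
    (hα : ∀ i r s, 0 < α i r s)
    (hγ : ∀ j q i r s, 0 ≤ γ j q i r s)
    (hγsum : ∀ j q i r, ∑ s, γ j q i r s < 1)
    (hder : ∀ i r,
      ((∑ s ∈ Finset.univ.erase r, α i r s • (P i s - P i r)) -
        ((A i)ᵀ * P i r + P i r * A i)).PosDef)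
    (hjump : ∀ i j, i ≠ j → ∀ q r,
      ((P i r + ∑ s ∈ Finset.univ.erase r, γ j q i r s • (P i s - P i r)) -
        (exp (τ • (A i)ᵀ) * P j q * exp (τ • A i))).PosDef) :
    ∀ δ : ℝ, 0 ≤ δ → ∀ i j : Fin N, i ≠ j → ∀ x : Fin n → ℝ, x ≠ 0 →
      pwMax hm (P j) (exp ((τ + δ) • A i) *ᵥ x) < pwMax hm (P i) x := by
  intro δ hδ i j hij x hx
  have hne : (Finset.univ : Finset (Fin m)).Nonempty :=
    Finset.univ_nonempty_iff.mpr ⟨⟨0, hm⟩⟩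
  set y := exp (δ • A i) *ᵥ x with hy
  -- y ≠ 0
  have hinv : exp (-(δ • A i)) * exp (δ • A i) = 1 := by
    rw [← Matrix.exp_add_of_commute _ _ ((Commute.refl (δ • A i)).neg_left), neg_add_cancel,
      exp_zero]
  have hyne : y ≠ 0 := by
    intro h0
    apply hx
    have : x = exp (-(δ • A i)) *ᵥ y := by
      rw [hy, Matrix.mulVec_mulVec, hinv, Matrix.one_mulVec]
    rw [this, h0, Matrix.mulVec_zero]
  -- splitting of the exponential
  have hsplit : exp ((τ + δ) • A i) = exp (τ • A i) * exp (δ • A i) := by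
    rw [add_smul]
    exact Matrix.exp_add_of_commute _ _ (((Commute.refl (A i)).smul_left τ).smul_right δ)
  have hz : exp ((τ + δ) • A i) *ᵥ x = exp (τ • A i) *ᵥ y := by
    rw [hsplit, hy, Matrix.mulVec_mulVec]
  -- step 1 : flow
  have step1 : pwMax hm (P i) y ≤ pwMax hm (P i) x :=
    pwMax_flow_le hm (A i) (P i) (α i) (hα i) (hder i) x hδ
  -- step 2 : jump
  have step2 : pwMax hm (P j) (exp (τ • A i) *ᵥ y) < pwMax hm (P i) y := by
    obtain ⟨r, -, hr⟩ := Finset.exists_mem_eq_sup'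
      (Finset.univ_nonempty_iff.mpr ⟨(⟨0, hm⟩ : Fin m)⟩) (fun r : Fin m => y ⬝ᵥ P i r *ᵥ y)
    have hrmax : ∀ s, y ⬝ᵥ P i s *ᵥ y ≤ y ⬝ᵥ P i r *ᵥ y := by
      intro s
      have := Finset.le_sup' (fun u : Fin m => y ⬝ᵥ P i u *ᵥ y) (Finset.mem_univ s)
      calc y ⬝ᵥ P i s *ᵥ y ≤ pwMax hm (P i) y := this
        _ = y ⬝ᵥ P i r *ᵥ y := hr
    rw [pwMax, Finset.sup'_lt_iff]
    intro q _
    have hpd := posdef_quad (hjump i j hij q r) hyne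
    rw [quad_sub, quad_add, quad_sum] at hpd
    have htrans : exp (τ • (A i)ᵀ) = (exp (τ • A i))ᵀ := by
      rw [← Matrix.transpose_smul, Matrix.exp_transpose]
    have hconj : (exp (τ • A i) *ᵥ y) ⬝ᵥ (P j q *ᵥ (exp (τ • A i) *ᵥ y)) =
        y ⬝ᵥ ((exp (τ • (A i)ᵀ) * P j q * exp (τ • A i)) *ᵥ y) := by
      rw [quad_conj, htrans]
    have hsum : ∑ s ∈ Finset.univ.erase r, y ⬝ᵥ ((γ j q i r s • (P i s - P i r)) *ᵥ y) ≤ 0 := by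
      apply Finset.sum_nonpos
      intro s _
      rw [quad_smul, quad_sub]
      exact mul_nonpos_of_nonneg_of_nonpos (hγ j q i r s) (by linarith [hrmax s])
    calc (exp (τ • A i) *ᵥ y) ⬝ᵥ (P j q *ᵥ (exp (τ • A i) *ᵥ y))
        = y ⬝ᵥ ((exp (τ • (A i)ᵀ) * P j q * exp (τ • A i)) *ᵥ y) := hconj
      _ < y ⬝ᵥ (P i r *ᵥ y) + ∑ s ∈ Finset.univ.erase r,
            y ⬝ᵥ ((γ j q i r s • (P i s - P i r)) *ᵥ y) := by linarith
      _ ≤ y ⬝ᵥ (P i r *ᵥ y) := by linarith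
      _ = pwMax hm (P i) y := hr.symm
  rw [hz]
  exact lt_of_lt_of_le step2 step1
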